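/- Let (U, 𝒮) be a laminar set system, let S be a set of non-singleton members of 𝒮, and let (A, B) be a bi-colouring identifying S. Then for every s ∈ S, the number of children c of s for which |(A ∪ B) ∩ c| is odd is exactly 2, while for every non-singleton member x ∈ 𝒮 with x ∉ S, the number of children c of x for which |(A ∪ B) ∩ c| is odd is at most 1. -/

import Mathlib

variable {α : Type*} [DecidableEq α] [Fintype α]

/-- A set system on the finite universe `α`: `∅ ∉ 𝒮`, `univ ∈ 𝒮`, all singletons in `𝒮`. -/
def IsSetSystem (𝒮 : Finset (Finset α)) : Prop :=
  (∅ : Finset α) ∉ 𝒮 ∧ Finset.univ ∈ 𝒮 ∧ ∀ a : α, ({a} : Finset α) ∈ 𝒮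

/-- Two sets overlap: non-disjoint and neither contains the other. -/
def Overlap (X Y : Finset α) : Prop :=
  (X ∩ Y).Nonempty ∧ ¬ X ⊆ Y ∧ ¬ Y ⊆ X

/-- A set system is laminar when no two members overlap. -/
def IsLaminar (𝒮 : Finset (Finset α)) : Prop :=
  ∀ X ∈ 𝒮, ∀ Y ∈ 𝒮, ¬ Overlap X Y

/-- `c` is a child of `x` in the laminar tree: a ⊆-maximal proper subset of `x` in `𝒮`. -/
def IsChild (𝒮 : Finset (Finset α)) (c x : Finset α) : Prop :=
  c ∈ 𝒮 ∧ c ⊂ x ∧ ∀ y ∈ 𝒮, y ⊂ x → c ⊆ y → y = c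

/-- `p` is the parent of `x`: the ⊆-minimal member of `𝒮` properly containing `x`. -/
def IsParent (𝒮 : Finset (Finset α)) (p x : Finset α) : Prop :=
  p ∈ 𝒮 ∧ x ⊂ p ∧ ∀ y ∈ 𝒮, x ⊂ y → p ⊆ y

/-- `(π, σ)` identifies `S`: a pair of injections on `S` such that each `s ∈ S` is the
⊆-minimal member of `𝒮` containing both `π s` and `σ s`. -/
def Identifies (𝒮 S : Finset (Finset α)) (π σ : Finset α → α) : Prop :=
  Set.InjOn π ↑S ∧ Set.InjOn σ ↑S ∧
  ∀ s ∈ S, π s ∈ s ∧ σ s ∈ s ∧ ∀ y ∈ 𝒮, π s ∈ y → σ s ∈ y → s ⊆ y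

/-- `x` is `s`-requested in `(π, σ)` (for `s ∈ S`): `x ⊆ s` and `π s ∈ x` or `σ s ∈ x`. -/
def Requested (S : Finset (Finset α)) (π σ : Finset α → α) (s x : Finset α) : Prop :=
  s ∈ S ∧ x ⊆ s ∧ (π s ∈ x ∨ σ s ∈ x)

/-- `(π, σ)` has unique request: every member of `𝒮` is `s`-requested for at most one `s ∈ S`. -/
def UniqueRequest (𝒮 S : Finset (Finset α)) (π σ : Finset α → α) : Prop :=
  ∀ x ∈ 𝒮, ∀ s s' : Finset α,
    Requested S π σ s x → Requested S π σ s' x → s = s'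

/-- The bi-colouring `(A, B)` (disjoint, equal cardinality) identifies `S`. -/
def BicolIdentifies (𝒮 S : Finset (Finset α)) (A B : Finset α) : Prop :=
  Disjoint A B ∧ A.card = B.card ∧
  ∃ π σ : Finset α → α, Identifies 𝒮 S π σ ∧ UniqueRequest 𝒮 S π σ ∧
    S.image π = A ∧ S.image σ = B

/-- `X` is a thin set of inner nodes: for every non-root `x ∈ X`, the parent of `x` is not
in `X` and `x` has a sibling not in `X`. -/
def Thin (𝒮 X : Finset (Finset α)) : Prop :=
  ∀ x ∈ X, x ≠ Finset.univ →
    (∀ p : Finset α, IsParent 𝒮 p x → p ∉ X) ∧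
    ∃ y p : Finset α, y ≠ x ∧ IsChild 𝒮 x p ∧ IsChild 𝒮 y p ∧ y ∉ X


section Aux

omit [Fintype α] in
lemma lam_sub {𝒮 : Finset (Finset α)} (hlam : IsLaminar 𝒮) {X Y : Finset α}
    (hX : X ∈ 𝒮) (hY : Y ∈ 𝒮) {a : α} (haX : a ∈ X) (haY : a ∈ Y) : X ⊆ Y ∨ Y ⊆ X := by
  by_contra h
  push_neg at h
  exact hlam X hX Y hY ⟨⟨a, Finset.mem_inter.2 ⟨haX, haY⟩⟩, h.1, h.2⟩

omit [Fintype α] in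
lemma child_exists {𝒮 : Finset (Finset α)} (hsing : ∀ a : α, ({a} : Finset α) ∈ 𝒮)
    {x : Finset α} {a : α} (ha : a ∈ x) (hne : x ≠ {a}) :
    ∃ c, IsChild 𝒮 c x ∧ a ∈ c := by
  set T : Finset (Finset α) := 𝒮.filter (fun y => y ⊂ x ∧ a ∈ y) with hT
  have hTne : T.Nonempty := ⟨{a}, Finset.mem_filter.2 ⟨hsing a,
    lt_of_le_of_ne (Finset.singleton_subset_iff.2 ha) (fun h => hne h.symm),
    Finset.mem_singleton_self a⟩⟩
  obtain ⟨c, hcT, hmax⟩ := T.exists_maximal hTne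
  rw [Finset.mem_filter] at hcT
  refine ⟨c, ⟨hcT.1, hcT.2.1, ?_⟩, hcT.2.2⟩
  intro y hy hyx hcy
  by_contra hne'
  exact hne' (le_antisymm (hmax (Finset.mem_filter.2 ⟨hy, hyx, hcy (hcT.2.2)⟩) hcy) hcy)

omit [Fintype α] in
lemma child_eq {𝒮 : Finset (Finset α)} (hlam : IsLaminar 𝒮) {c c' x : Finset α}
    (hc : IsChild 𝒮 c x) (hc' : IsChild 𝒮 c' x) {a : α} (hac : a ∈ c) (hac' : a ∈ c') :
    c = c' := by
  rcases lam_sub hlam hc.1 hc'.1 hac hac' with h | h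
  · exact (hc.2.2 c' hc'.1 hc'.2.1 h).symm
  · exact hc'.2.2 c hc.1 hc.2.1 h

lemma parity_lemma {𝒮 S : Finset (Finset α)} (hlam : IsLaminar 𝒮)
    {π σ : Finset α → α} (hid : Identifies 𝒮 S π σ) (hur : UniqueRequest 𝒮 S π σ)
    {A B : Finset α} (hd : Disjoint A B) (hA : S.image π = A) (hB : S.image σ = B)
    (hSsub : ∀ x ∈ S, x ∈ 𝒮)
    {c : Finset α} (hc : c ∈ 𝒮) :
    Odd ((A ∪ B) ∩ c).card ↔ ∃ s ∈ S, c ⊂ s ∧ (π s ∈ c ∨ σ s ∈ c) := by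
  obtain ⟨hπ, hσ, hmin⟩ := hid
  have hcard : ((A ∪ B) ∩ c).card
      = ∑ s ∈ S, ((if π s ∈ c then 1 else 0) + (if σ s ∈ c then 1 else 0)) := by
    rw [Finset.union_inter_distrib_right,
      Finset.card_union_of_disjoint (hd.mono Finset.inter_subset_left Finset.inter_subset_left)]
    have h1 : A ∩ c = (S.filter (fun s => π s ∈ c)).image π := by
      rw [← hA]; ext a
      simp only [Finset.mem_inter, Finset.mem_image, Finset.mem_filter]
      constructor
      · rintro ⟨⟨s, hs, rfl⟩, hac⟩; exact ⟨s, ⟨hs, hac⟩, rfl⟩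
      · rintro ⟨s, ⟨hs, hac⟩, rfl⟩; exact ⟨⟨s, hs, rfl⟩, hac⟩
    have h2 : B ∩ c = (S.filter (fun s => σ s ∈ c)).image σ := by
      rw [← hB]; ext a
      simp only [Finset.mem_inter, Finset.mem_image, Finset.mem_filter]
      constructor
      · rintro ⟨⟨s, hs, rfl⟩, hac⟩; exact ⟨s, ⟨hs, hac⟩, rfl⟩
      · rintro ⟨s, ⟨hs, hac⟩, rfl⟩; exact ⟨⟨s, hs, rfl⟩, hac⟩
    rw [h1, h2,
      Finset.card_image_of_injOn (hπ.mono (by simp only [Finset.coe_filter]; exact fun x hx => hx.1)),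
      Finset.card_image_of_injOn (hσ.mono (by simp only [Finset.coe_filter]; exact fun x hx => hx.1)),
      Finset.card_filter, Finset.card_filter, ← Finset.sum_add_distrib]
  rw [hcard, Finset.odd_sum_iff_odd_card_odd]
  have hfilt : (S.filter fun s =>
      Odd ((if π s ∈ c then 1 else 0) + (if σ s ∈ c then 1 else 0)))
      = S.filter (fun s => c ⊂ s ∧ (π s ∈ c ∨ σ s ∈ c)) := by
    apply Finset.filter_congr
    intro s hs
    obtain ⟨hπs, hσs, hms⟩ := hmin s hs
    by_cases h1 : π s ∈ c <;> by_cases h2 : σ s ∈ c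
    · rw [if_pos h1, if_pos h2]
      refine iff_of_false (by decide) ?_
      rintro ⟨hsub, -⟩
      exact (Finset.ssubset_def.1 hsub).2 (hms c hc h1 h2)
    · rw [if_pos h1, if_neg h2]
      refine iff_of_true (by decide) ⟨?_, Or.inl h1⟩
      rcases lam_sub hlam hc (hSsub s hs) h1 hπs with h | h
      · exact Finset.ssubset_iff_subset_ne.2 ⟨h, fun he => h2 (he ▸ hσs)⟩
      · exact absurd (h hσs) h2
    · rw [if_neg h1, if_pos h2]
      refine iff_of_true (by decide) ⟨?_, Or.inr h2⟩
      rcases lam_sub hlam hc (hSsub s hs) h2 hσs with h | h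
      · exact Finset.ssubset_iff_subset_ne.2 ⟨h, fun he => h1 (he ▸ hπs)⟩
      · exact absurd (h hπs) h1
    · rw [if_neg h1, if_neg h2]
      refine iff_of_false (by decide) ?_
      rintro ⟨-, h | h⟩
      · exact h1 h
      · exact h2 h
  rw [hfilt]
  set T := S.filter (fun s => c ⊂ s ∧ (π s ∈ c ∨ σ s ∈ c)) with hT
  have hle : T.card ≤ 1 := by
    rw [Finset.card_le_one]
    intro s hs s' hs'
    rw [hT, Finset.mem_filter] at hs hs'
    exact hur c hc s s' ⟨hs.1, hs.2.1.subset, hs.2.2⟩ ⟨hs'.1, hs'.2.1.subset, hs'.2.2⟩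
  constructor
  · intro hodd
    have h1 : T.card = 1 := by
      rcases Nat.le_one_iff_eq_zero_or_eq_one.1 hle with h | h
      · rw [h] at hodd; norm_num at hodd
      · exact h
    obtain ⟨s, hsT⟩ := Finset.card_pos.1 (h1 ▸ Nat.one_pos)
    rw [hT, Finset.mem_filter] at hsT
    exact ⟨s, hsT.1, hsT.2⟩
  · rintro ⟨s, hs, hcs, hor⟩
    have hne : T.Nonempty := ⟨s, by rw [hT, Finset.mem_filter]; exact ⟨hs, hcs, hor⟩⟩
    have h1 : T.card = 1 := le_antisymm hle (Finset.card_pos.2 hne)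
    rw [h1]; exact odd_one

end Aux

/-- For `(A, B)` identifying `S`: every `s ∈ S` has exactly `2` children `c` with
`|(A ∪ B) ∩ c|` odd, and every non-singleton member `x ∉ S` has at most `1` such child. -/
theorem stmt_9 (𝒮 : Finset (Finset α)) (hsys : IsSetSystem 𝒮) (hlam : IsLaminar 𝒮)
    (S : Finset (Finset α)) (hS : ∀ x ∈ S, x ∈ 𝒮 ∧ ∀ a : α, x ≠ {a})
    (A B : Finset α) (hAB : BicolIdentifies 𝒮 S A B) :
    (∀ s ∈ S,
      {c : Finset α | IsChild 𝒮 c s ∧ Odd ((A ∪ B) ∩ c).card}.ncard = 2) ∧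
    (∀ x ∈ 𝒮, (∀ a : α, x ≠ {a}) → x ∉ S →
      {c : Finset α | IsChild 𝒮 c x ∧ Odd ((A ∪ B) ∩ c).card}.ncard ≤ 1) := by
  obtain ⟨hd, hcardAB, π, σ, hid, hur, hA, hB⟩ := hAB
  obtain ⟨hempty, huniv, hsing⟩ := hsys
  have hSsub : ∀ x ∈ S, x ∈ 𝒮 := fun x hx => (hS x hx).1
  have hpar : ∀ c ∈ 𝒮, (Odd ((A ∪ B) ∩ c).card ↔ ∃ s ∈ S, c ⊂ s ∧ (π s ∈ c ∨ σ s ∈ c)) :=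
    fun c hc => parity_lemma hlam hid hur hd hA hB hSsub hc
  constructor
  · intro s hs
    obtain ⟨hπs, hσs, hms⟩ := hid.2.2 s hs
    obtain ⟨cπ, hcπ, hπc⟩ := child_exists hsing hπs ((hS s hs).2 (π s))
    obtain ⟨cσ, hcσ, hσc⟩ := child_exists hsing hσs ((hS s hs).2 (σ s))
    have hnecc : cπ ≠ cσ := by
      intro h
      exact (Finset.ssubset_def.1 hcπ.2.1).2 (hms cπ hcπ.1 hπc (h ▸ hσc))
    have key : ∀ c, IsChild 𝒮 c s → ∀ s' ∈ S, c ⊂ s' → (π s' ∈ c ∨ σ s' ∈ c) → s' = s := by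
      intro c hch s' hs' hcs' hor
      have hp : ∃ p, p ∈ c ∧ p ∈ s' := by
        rcases hor with h | h
        · exact ⟨π s', h, (hid.2.2 s' hs').1⟩
        · exact ⟨σ s', h, (hid.2.2 s' hs').2.1⟩
      obtain ⟨p, hpc, hps'⟩ := hp
      rcases lam_sub hlam (hSsub s hs) (hSsub s' hs') (hch.2.1.subset hpc) hps' with h | h
      · refine hur s (hSsub s hs) s' s ⟨hs', h, ?_⟩ ⟨hs, subset_rfl, Or.inl hπs⟩
        exact hor.imp (fun h' => hch.2.1.subset h') (fun h' => hch.2.1.subset h')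
      · by_cases he : s' = s
        · exact he
        · have heq := hch.2.2 s' (hSsub s' hs') (Finset.ssubset_iff_subset_ne.2 ⟨h, he⟩)
            hcs'.subset
          exact absurd (heq ▸ hcs' : (s' : Finset _) ⊂ s') (fun hq => (Finset.ssubset_def.1 hq).2 subset_rfl)
    have hset : {c : Finset α | IsChild 𝒮 c s ∧ Odd ((A ∪ B) ∩ c).card} = {cπ, cσ} := by
      ext c
      simp only [Set.mem_setOf_eq, Set.mem_insert_iff, Set.mem_singleton_iff]
      constructor
      · rintro ⟨hch, hodd⟩
        obtain ⟨s', hs', hcs', hor⟩ := (hpar c hch.1).1 hodd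
        rw [key c hch s' hs' hcs' hor] at hor
        rcases hor with h | h
        · exact Or.inl (child_eq hlam hch hcπ h hπc)
        · exact Or.inr (child_eq hlam hch hcσ h hσc)
      · rintro (rfl | rfl)
        · exact ⟨hcπ, (hpar _ hcπ.1).2 ⟨s, hs, hcπ.2.1, Or.inl hπc⟩⟩
        · exact ⟨hcσ, (hpar _ hcσ.1).2 ⟨s, hs, hcσ.2.1, Or.inr hσc⟩⟩
    rw [hset]
    exact Set.ncard_pair hnecc
  · intro x hx hxsing hxS
    rw [Set.ncard_le_one (Set.toFinite _)]
    rintro c ⟨hch, hodd⟩ c' ⟨hch', hodd'⟩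
    have step : ∀ d, IsChild 𝒮 d x → Odd ((A ∪ B) ∩ d).card →
        ∃ s ∈ S, x ⊆ s ∧ (π s ∈ d ∨ σ s ∈ d) := by
      intro d hd hod
      obtain ⟨s, hs, hds, hor⟩ := (hpar d hd.1).1 hod
      have hp : ∃ p, p ∈ d ∧ p ∈ s := by
        rcases hor with h | h
        · exact ⟨π s, h, (hid.2.2 s hs).1⟩
        · exact ⟨σ s, h, (hid.2.2 s hs).2.1⟩
      obtain ⟨p, hpd, hps⟩ := hp
      rcases lam_sub hlam hx (hSsub s hs) (hd.2.1.subset hpd) hps with h | h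
      · exact ⟨s, hs, h, hor⟩
      · by_cases he : s = x
        · exact ⟨s, hs, he ▸ subset_rfl, hor⟩
        · have heq := hd.2.2 s (hSsub s hs) (Finset.ssubset_iff_subset_ne.2 ⟨h, he⟩) hds.subset
          exact absurd (heq ▸ hds : (s : Finset _) ⊂ s) (fun hq => (Finset.ssubset_def.1 hq).2 subset_rfl)
    obtain ⟨s, hs, hxs, hor⟩ := step c hch hodd
    obtain ⟨s', hs', hxs', hor'⟩ := step c' hch' hodd'
    have hss : s = s' := by
      refine hur x hx s s' ⟨hs, hxs, ?_⟩ ⟨hs', hxs', ?_⟩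
      · exact hor.imp (fun h => hch.2.1.subset h) (fun h => hch.2.1.subset h)
      · exact hor'.imp (fun h => hch'.2.1.subset h) (fun h => hch'.2.1.subset h)
    subst hss
    have hboth : ∀ (h1 : π s ∈ c) (h2 : σ s ∈ c'), False := by
      intro h1 h2
      have hsx : s ⊆ x := (hid.2.2 s hs).2.2 x hx (hch.2.1.subset h1) (hch'.2.1.subset h2)
      exact hxS (by rwa [Finset.Subset.antisymm hxs hsx])
    have hboth' : ∀ (h1 : σ s ∈ c) (h2 : π s ∈ c'), False := by
      intro h1 h2
      have hsx : s ⊆ x := (hid.2.2 s hs).2.2 x hx (hch'.2.1.subset h2) (hch.2.1.subset h1)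
      exact hxS (by rwa [Finset.Subset.antisymm hxs hsx])
    rcases hor with h1 | h1 <;> rcases hor' with h2 | h2
    · exact child_eq hlam hch hch' h1 h2
    · exact absurd (hboth h1 h2) not_false
    · exact absurd (hboth' h1 h2) not_false
    · exact child_eq hlam hch hch' h1 h2
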